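/- Let L ≥ 3 be an integer, λ > 0, and let x* = ((L-2)/L)^{1/(2L-2)} · λ^{1/(2L-2)} and y* = (((L-2)/L)^{L/(2L-2)} + (L/(L-2))^{(L-2)/(2L-2)}) · λ^{1/(2L-2)}. If y > y* and z₁ > z₂ > 0 are the two positive roots of f(x;y) = x^{2L-1} - √λ·y·x^{L-1} + λ·x = 0, then z₁ > x* > z₂. -/

import Mathlib

private lemma key_ineq (m : ℕ) (u : ℝ) (hu : 0 < u) (hne : u ≠ 1) :
    (2 * (m : ℝ) + 4) * u ^ (m + 1) < ((m : ℝ) + 1) * u ^ (2 * m + 4) + ((m : ℝ) + 3) := by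
  have hm1 : (0 : ℝ) < (m : ℝ) + 1 := by positivity
  set p : ℝ := (2 * (m : ℝ) + 4) / ((m : ℝ) + 1) with hp
  have hp1 : 1 < p := by
    rw [hp, lt_div_iff₀ hm1]; linarith
  set s : ℝ := u ^ (m + 1) - 1 with hs
  have hs1 : -1 ≤ s := by
    have : (0:ℝ) ≤ u ^ (m+1) := by positivity
    simp [hs]; linarith
  have hs0 : s ≠ 0 := by
    rcases lt_or_gt_of_ne hne with h | h
    · have h2 : u ^ (m+1) < 1 ^ (m+1) := pow_lt_pow_left₀ h hu.le (Nat.succ_ne_zero m)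
      simp only [one_pow] at h2
      simp only [hs]; intro hc; nlinarith
    · have h2 : 1 < u ^ (m+1) := one_lt_pow₀ h (Nat.succ_ne_zero m)
      simp only [hs]; intro hc; nlinarith
  have hb := one_add_mul_self_lt_rpow_one_add hs1 hs0 hp1
  have hpow : (1 + s) ^ p = u ^ (2 * m + 4) := by
    have h1 : (1 : ℝ) + s = u ^ (m + 1) := by simp [hs]
    rw [h1, ← Real.rpow_natCast u (m+1), ← Real.rpow_mul hu.le, ← Real.rpow_natCast u (2*m+4)]
    congr 1
    rw [hp]
    push_cast
    field_simp
  rw [hpow] at hb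
  have hb' : ((m:ℝ)+1) * (1 + p * s) < ((m:ℝ)+1) * u ^ (2*m+4) :=
    (mul_lt_mul_iff_right₀ hm1).mpr hb
  have hps : ((m:ℝ)+1) * (p * s) = (2*(m:ℝ)+4) * s := by
    rw [hp]; field_simp
  nlinarith [hb', hps]

private lemma key_ineq' (m : ℕ) (a b : ℝ) (ha : 0 < a) (hb : 0 < b) (hab : a ≠ b) :
    (2 * (m : ℝ) + 4) * a ^ (m + 1) * b ^ (m + 3)
      < ((m : ℝ) + 1) * a ^ (2 * m + 4) + ((m : ℝ) + 3) * b ^ (2 * m + 4) := by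
  have hu : (0:ℝ) < a / b := by positivity
  have hne : a / b ≠ 1 := by
    intro h; exact hab (by field_simp at h; linarith)
  have h := key_ineq m (a/b) hu hne
  have hbp : (0:ℝ) < b ^ (2*m+4) := by positivity
  have h2 := (mul_lt_mul_iff_left₀ hbp).mpr h
  have e1 : (2 * (m : ℝ) + 4) * (a/b) ^ (m + 1) * b ^ (2*m+4)
      = (2 * (m : ℝ) + 4) * a ^ (m + 1) * b ^ (m + 3) := by
    rw [div_pow]
    field_simp
    ring
  have e2 : (((m : ℝ) + 1) * (a/b) ^ (2 * m + 4) + ((m : ℝ) + 3)) * b ^ (2*m+4)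
      = ((m : ℝ) + 1) * a ^ (2 * m + 4) + ((m : ℝ) + 3) * b ^ (2 * m + 4) := by
    rw [div_pow]
    field_simp
  rw [e1, e2] at h2
  exact h2

theorem stmt_5 (L : ℕ) (hL : 3 ≤ L) (lam y z1 z2 : ℝ) (hlam : 0 < lam)
    (hy : ((((L : ℝ) - 2) / L) ^ ((L : ℝ) / (2 * (L : ℝ) - 2))
        + ((L : ℝ) / ((L : ℝ) - 2)) ^ (((L : ℝ) - 2) / (2 * (L : ℝ) - 2)))
        * lam ^ ((1 : ℝ) / (2 * (L : ℝ) - 2)) < y)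
    (hz2 : 0 < z2) (hz12 : z2 < z1)
    (h1 : z1 ^ (2 * L - 1) - Real.sqrt lam * y * z1 ^ (L - 1) + lam * z1 = 0)
    (h2 : z2 ^ (2 * L - 1) - Real.sqrt lam * y * z2 ^ (L - 1) + lam * z2 = 0) :
    (((L : ℝ) - 2) / L) ^ ((1 : ℝ) / (2 * (L : ℝ) - 2))
        * lam ^ ((1 : ℝ) / (2 * (L : ℝ) - 2)) < z1 ∧
      z2 < (((L : ℝ) - 2) / L) ^ ((1 : ℝ) / (2 * (L : ℝ) - 2))
        * lam ^ ((1 : ℝ) / (2 * (L : ℝ) - 2)) := by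
  obtain ⟨m, rfl⟩ : ∃ m, L = m + 3 := ⟨L - 3, by omega⟩
  clear hy hL
  have hz1 : 0 < z1 := hz2.trans hz12
  have he1 : 2 * (m + 3) - 1 = 2 * m + 5 := by omega
  have he2 : m + 3 - 1 = m + 2 := by omega
  rw [he1, he2] at h1 h2
  -- eliminate sqrt lam * y
  have E : lam * z1 * z2 * (z1 ^ (m+1) - z2 ^ (m+1))
      = z1 ^ (m+2) * z2 ^ (m+2) * (z1 ^ (m+3) - z2 ^ (m+3)) := by
    linear_combination z1 ^ (m+2) * h2 - z2 ^ (m+2) * h1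
  have hpowlt : z2 ^ (m+1) < z1 ^ (m+1) := pow_lt_pow_left₀ hz12 hz2.le (Nat.succ_ne_zero m)
  have hD : 0 < z1 * z2 * (z1 ^ (m+1) - z2 ^ (m+1)) :=
    mul_pos (mul_pos hz1 hz2) (sub_pos.mpr hpowlt)
  have e12 : ∀ x : ℝ, x ^ (m+2) = x ^ (m+1) * x := fun x => by rw [pow_succ]
  have e13 : ∀ x : ℝ, x ^ (m+3) = x ^ (m+1) * x ^ 2 := fun x => by
    rw [show m+3 = (m+1)+2 by ring, pow_add]
  have e14 : ∀ x : ℝ, x ^ (2*m+4) = (x ^ (m+1)) ^ 2 * x ^ 2 := fun x => by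
    rw [show 2*m+4 = (m+1)*2+2 by ring, pow_add, pow_mul]
  -- key polynomial facts
  have K1 := key_ineq' m z2 z1 hz2 hz1 (ne_of_lt hz12)
  have K2 := key_ineq' m z1 z2 hz1 hz2 (ne_of_gt hz12)
  rw [e12 z1, e12 z2, e13 z1, e13 z2] at E
  rw [e13 z1, e14 z1, e14 z2] at K1
  rw [e13 z2, e14 z1, e14 z2] at K2
  have hE1 : ((m:ℝ)+1) * (lam * z1 * z2 * (z1 ^ (m+1) - z2 ^ (m+1)))
      = ((m:ℝ)+1) * (z1 ^ (m+1) * z1 * (z2 ^ (m+1) * z2) * (z1 ^ (m+1) * z1 ^ 2 - z2 ^ (m+1) * z2 ^ 2)) := by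
    linear_combination ((m:ℝ)+1) * E
  have final1 : ((m:ℝ)+1) * lam < ((m:ℝ)+3) * z1 ^ (2*m+4) := by
    rw [e14 z1]
    have step : ((m:ℝ)+1) * lam * (z1 * z2 * (z1 ^ (m+1) - z2 ^ (m+1)))
        < ((m:ℝ)+3) * ((z1 ^ (m+1)) ^ 2 * z1 ^ 2) * (z1 * z2 * (z1 ^ (m+1) - z2 ^ (m+1))) := by
      have h := mul_lt_mul_of_pos_left K1
        (show (0:ℝ) < z1 ^ (m+1) * z1 * z2 by positivity)
      nlinarith [h, hE1]
    exact lt_of_mul_lt_mul_right step hD.le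
  have final2 : ((m:ℝ)+3) * z2 ^ (2*m+4) < ((m:ℝ)+1) * lam := by
    rw [e14 z2]
    have step : ((m:ℝ)+3) * ((z2 ^ (m+1)) ^ 2 * z2 ^ 2) * (z1 * z2 * (z1 ^ (m+1) - z2 ^ (m+1)))
        < ((m:ℝ)+1) * lam * (z1 * z2 * (z1 ^ (m+1) - z2 ^ (m+1))) := by
      have h := mul_lt_mul_of_pos_left K2
        (show (0:ℝ) < z1 * (z2 ^ (m+1) * z2) by positivity)
      nlinarith [h, hE1]
    exact lt_of_mul_lt_mul_right step hD.le
  -- express x*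
  have hm3 : (0:ℝ) < (m:ℝ) + 3 := by positivity
  set c : ℝ := 2 * (m:ℝ) + 4 with hc
  have hc0 : c ≠ 0 := by positivity
  have hLcast : ((m + 3 : ℕ) : ℝ) = (m:ℝ) + 3 := by push_cast; ring
  have hA : (0:ℝ) < ((m:ℝ)+1)/((m:ℝ)+3) := by positivity
  set xs : ℝ := (((m:ℝ)+1)/((m:ℝ)+3)) ^ ((1:ℝ)/c) * lam ^ ((1:ℝ)/c) with hxs
  have hxs_pos : 0 < xs := by
    rw [hxs]; positivity
  have hxspow : xs ^ (2*m+4) = ((m:ℝ)+1)/((m:ℝ)+3) * lam := by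
    rw [hxs, ← Real.rpow_natCast (_ * _) (2*m+4), Real.mul_rpow (by positivity) (by positivity),
      ← Real.rpow_mul hA.le, ← Real.rpow_mul hlam.le]
    have h1c : (1:ℝ)/c * ((2*m+4 : ℕ) : ℝ) = 1 := by
      rw [hc]; push_cast; field_simp
    rw [h1c, Real.rpow_one, Real.rpow_one]
  have hgoal : ((((m+3:ℕ):ℝ) - 2) / ((m+3:ℕ):ℝ)) ^ ((1:ℝ) / (2 * ((m+3:ℕ):ℝ) - 2))
      * lam ^ ((1:ℝ) / (2 * ((m+3:ℕ):ℝ) - 2)) = xs := by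
    rw [hxs, hLcast]
    have e1 : ((m:ℝ) + 3 - 2) / ((m:ℝ) + 3) = ((m:ℝ)+1)/((m:ℝ)+3) := by ring_nf
    have e2 : 2 * ((m:ℝ) + 3) - 2 = c := by rw [hc]; ring
    rw [e1, e2]
  rw [hgoal]
  constructor
  · refine lt_of_pow_lt_pow_left₀ (2*m+4) hz1.le ?_
    rw [hxspow, div_mul_eq_mul_div, div_lt_iff₀ hm3]
    calc ((m:ℝ)+1) * lam < ((m:ℝ)+3) * z1 ^ (2*m+4) := final1
    _ = z1 ^ (2*m+4) * ((m:ℝ)+3) := by ring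
  · refine lt_of_pow_lt_pow_left₀ (2*m+4) hxs_pos.le ?_
    rw [hxspow, div_mul_eq_mul_div, lt_div_iff₀ hm3]
    calc z2 ^ (2*m+4) * ((m:ℝ)+3) = ((m:ℝ)+3) * z2 ^ (2*m+4) := by ring
    _ < ((m:ℝ)+1) * lam := final2
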